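/- For an odd prime p, the binary code generated by the incidence matrix of the unit graph G(Z_p) has length (p-1)^2/2, dimension p-1, and minimum distance p-2. -/

import Mathlib

open SimpleGraph Finset
open scoped Classical

/-- The unit graph of a commutative ring: distinct `x, y` adjacent iff `x + y` is a unit. -/
def unitGraphR (R : Type*) [CommRing R] : SimpleGraph R where
  Adj x y := x ≠ y ∧ IsUnit (x + y)
  symm := ⟨fun x y ⟨h1, h2⟩ => ⟨h1.symm, by rwa [add_comm]⟩⟩
  loopless := ⟨fun x ⟨h, _⟩ => h rfl⟩

/-- The unit graph of `ZMod n`. -/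
def unitGraph (n : ℕ) : SimpleGraph (ZMod n) := unitGraphR (ZMod n)

/-- The number of edges of `G` with one endpoint in `W` and the other outside `W`. -/
noncomputable def cutSize {V : Type*} [Fintype V] (G : SimpleGraph V) (W : Finset V) : ℕ :=
  (G.edgeFinset.filter (fun e => (∃ x ∈ e, x ∈ W) ∧ (∃ x ∈ e, x ∉ W))).card

/-- The edge-connectivity of `G`: minimum cut size over nonempty proper vertex subsets. -/
noncomputable def edgeConn {V : Type*} [Fintype V] (G : SimpleGraph V) : ℕ :=
  sInf {n | ∃ W : Finset V, W.Nonempty ∧ W ≠ Finset.univ ∧ n = cutSize G W}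

/-- The incidence matrix of `G` over `F_2`, rows indexed by vertices, columns by edges. -/
noncomputable def incMat {V : Type*} [Fintype V] (G : SimpleGraph V) :
    Matrix V G.edgeFinset (ZMod 2) :=
  fun v e => if v ∈ (e : Sym2 V) then 1 else 0

/-- The binary code generated by the rows of the incidence matrix of `G`. -/
noncomputable def rowCode {V : Type*} [Fintype V] (G : SimpleGraph V) :
    Submodule (ZMod 2) (G.edgeFinset → ZMod 2) :=
  Submodule.span (ZMod 2) (Set.range (incMat G))

/-- The minimum Hamming weight of a nonzero codeword of the incidence-matrix code of `G`. -/
noncomputable def minDist {V : Type*} [Fintype V] (G : SimpleGraph V) : ℕ :=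
  sInf {w | ∃ c ∈ rowCode G, c ≠ 0 ∧ w = hammingNorm c}

section Aux

variable {p : ℕ} [hp : Fact p.Prime]

lemma zmod2_cases (x : ZMod 2) : x = 0 ∨ x = 1 := by revert x; decide

lemma zmod2_one_add_zero : (1 : ZMod 2) + 0 ≠ 0 := by decide

lemma ug_adj {x y : ZMod p} : (unitGraph p).Adj x y ↔ x ≠ y ∧ x + y ≠ 0 := by
  unfold unitGraph unitGraphR
  simp [isUnit_iff_ne_zero]

lemma p_ge_three (hodd : Odd p) : 3 ≤ p := by
  have h2 := hp.out.two_le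
  rcases Nat.lt_or_ge p 3 with h | h
  · interval_cases p
    · exact absurd hodd (by decide)
  · exact h

lemma zmod_neg_ne_self (hodd : Odd p) {v : ZMod p} (hv : v ≠ 0) : -v ≠ v := by
  intro h
  have h2 : (2 : ZMod p) ≠ 0 := by
    have : ((2 : ℕ) : ZMod p) ≠ 0 := by
      rw [Ne, ZMod.natCast_eq_zero_iff]
      intro hdvd
      have := (Nat.prime_dvd_prime_iff_eq hp.out Nat.prime_two).mp hdvd
      exact absurd hodd (by rw [this]; decide)
    simpa using this
  have hv2 : (2 : ZMod p) * v = 0 := by linear_combination -h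
  rcases mul_eq_zero.mp hv2 with h' | h'
  · exact h2 h'
  · exact hv h'

lemma neighborFinset_eq (hodd : Odd p) (v : ZMod p) :
    (unitGraph p).neighborFinset v = ({v, -v} : Finset (ZMod p))ᶜ := by
  ext y
  rw [SimpleGraph.mem_neighborFinset, ug_adj, Finset.mem_compl, Finset.mem_insert,
    Finset.mem_singleton]
  constructor
  · rintro ⟨h1, h2⟩ (rfl | rfl)
    · exact h1 rfl
    · exact h2 (by ring)
  · intro h
    push_neg at h
    exact ⟨fun hh => h.1 hh.symm, fun hh => h.2 (by linear_combination hh)⟩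

lemma degree_eq (hodd : Odd p) (v : ZMod p) :
    (unitGraph p).degree v = if v = 0 then p - 1 else p - 2 := by
  rw [← SimpleGraph.card_neighborFinset_eq_degree, neighborFinset_eq hodd,
    Finset.card_compl, ZMod.card]
  split_ifs with h
  · subst h; simp
  · rw [Finset.card_insert_of_notMem (by simpa using (zmod_neg_ne_self hodd h).symm),
      Finset.card_singleton]

/-- Cardinality of a filtered subtype finset. -/
lemma card_filter_coe {α : Type*} [Fintype α] [DecidableEq α] (E : Finset α) (q : α → Prop) :
    (Finset.univ.filter fun x : ↥E => q x.val).card = (E.filter q).card := by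
  classical
  apply Finset.card_bij (fun x _ => x.val)
  · intro a ha
    simp only [Finset.mem_filter, Finset.mem_univ, true_and] at ha ⊢
    exact ⟨a.2, ha⟩
  · intro a _ b _ h
    exact Subtype.ext h
  · intro b hb
    simp only [Finset.mem_filter] at hb
    exact ⟨⟨b, hb.1⟩, by simp [hb.2], rfl⟩

end Aux

section Main

variable {p : ℕ} [hp : Fact p.Prime]

/-- The linear map sending weights to the corresponding combination of rows. -/
noncomputable def phi (p : ℕ) [Fact p.Prime] :
    (ZMod p → ZMod 2) →ₗ[ZMod 2] (↥(unitGraph p).edgeFinset → ZMod 2) :=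
  Fintype.linearCombination (ZMod 2) (incMat (unitGraph p))

lemma rowCode_eq_range : rowCode (unitGraph p) = LinearMap.range (phi p) :=
  (Fintype.range_linearCombination _ _).symm

lemma phi_eval (f : ZMod p → ZMod 2) {a b : ZMod p} (hab : a ≠ b)
    (he : s(a, b) ∈ (unitGraph p).edgeFinset) :
    phi p f ⟨s(a, b), he⟩ = f a + f b := by
  classical
  have : phi p f ⟨s(a, b), he⟩ =
      ∑ v : ZMod p, f v • (if v ∈ s(a, b) then (1 : ZMod 2) else 0) := by
    show (∑ i, f i • incMat (unitGraph p) i) ⟨s(a, b), he⟩ = _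
    rw [Finset.sum_apply]
    simp [phi, Fintype.linearCombination_apply, incMat]
  rw [this]
  simp only [smul_eq_mul, mul_ite, mul_one, mul_zero]
  have hfil : Finset.univ.filter (fun x => x ∈ s(a, b)) = ({a, b} : Finset (ZMod p)) := by
    ext x
    simp [Sym2.mem_iff]
  rw [← Finset.sum_filter, hfil, Finset.sum_pair hab]


lemma edge_mem {a b : ZMod p} (hab : a ≠ b) (hsum : a + b ≠ 0) :
    s(a, b) ∈ (unitGraph p).edgeFinset := by
  rw [SimpleGraph.mem_edgeFinset, SimpleGraph.mem_edgeSet, ug_adj]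
  exact ⟨hab, hsum⟩

lemma phi_const_one : phi p (fun _ => (1 : ZMod 2)) = 0 := by
  funext e
  obtain ⟨e, he⟩ := e
  revert he
  induction e using Sym2.ind with
  | _ a b =>
    intro he
    have hadj : (unitGraph p).Adj a b :=
      (unitGraph p).mem_edgeSet.mp (SimpleGraph.mem_edgeFinset.mp he)
    rw [phi_eval _ hadj.ne he, Pi.zero_apply]
    decide

lemma ker_phi : LinearMap.ker (phi p) =
    Submodule.span (ZMod 2) {(fun _ => 1 : ZMod p → ZMod 2)} := by
  apply le_antisymm
  · intro f hf
    rw [LinearMap.mem_ker] at hf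
    rw [Submodule.mem_span_singleton]
    refine ⟨f 0, ?_⟩
    funext x
    simp only [Pi.smul_apply, smul_eq_mul, mul_one]
    by_cases hx : x = 0
    · subst hx; rfl
    · have he : s((0 : ZMod p), x) ∈ (unitGraph p).edgeFinset :=
        edge_mem (Ne.symm hx) (by simpa using hx)
      have h0 : (0 : ZMod 2) = f 0 + f x := by
        rw [← phi_eval f (Ne.symm hx) he, hf]; rfl
      rcases zmod2_cases (f 0) with h | h <;> rcases zmod2_cases (f x) with h' | h' <;>
        simp [h, h'] at h0 ⊢
  · rw [Submodule.span_le, Set.singleton_subset_iff]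
    exact LinearMap.mem_ker.mpr phi_const_one

lemma arith_aux {k k' t n : ℕ} (hk : 1 ≤ k) (hk' : 1 ≤ k') (ht : t ≤ k) (ht' : t ≤ k')
    (hn : n + t = k * k') : k + k' - 2 ≤ n := by
  obtain ⟨a, rfl⟩ : ∃ a, k = a + 1 := ⟨k - 1, by omega⟩
  obtain ⟨b, rfl⟩ : ∃ b, k' = b + 1 := ⟨k' - 1, by omega⟩
  have hprod : (a + 1) * (b + 1) = a * b + a + b + 1 := by ring
  rw [hprod] at hn
  rcases Nat.eq_zero_or_pos a with ha | ha
  · subst ha; simp at hn; omega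
  · rcases Nat.eq_zero_or_pos b with hb | hb
    · subst hb; simp at hn; omega
    · have hab : a ≤ a * b := Nat.le_mul_of_pos_right a hb
      omega

lemma hamming_ge (hodd : Odd p) {c : ↥(unitGraph p).edgeFinset → ZMod 2}
    (hc : c ∈ rowCode (unitGraph p)) (hne : c ≠ 0) : p - 2 ≤ hammingNorm c := by
  classical
  rw [rowCode_eq_range] at hc
  obtain ⟨f, rfl⟩ := hc
  set W : Finset (ZMod p) := Finset.univ.filter (fun x => f x = 1) with hW
  set W' : Finset (ZMod p) := Finset.univ.filter (fun x => f x = 0) with hW'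
  set P : Finset (ZMod p × ZMod p) :=
    (W ×ˢ W').filter (fun ab => ab.1 + ab.2 ≠ 0) with hP
  set T : Finset (ZMod p × ZMod p) :=
    (W ×ˢ W').filter (fun ab => ab.1 + ab.2 = 0) with hT
  have memP : ∀ ab : ZMod p × ZMod p,
      ab ∈ P ↔ f ab.1 = 1 ∧ f ab.2 = 0 ∧ ab.1 + ab.2 ≠ 0 := by
    intro ab
    simp [hP, hW, hW', Finset.mem_filter, Finset.mem_product, and_assoc]
  have hPne : ∀ ab ∈ P, ab.1 ≠ ab.2 := by
    intro ab hab
    rw [memP] at hab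
    intro h
    have hcon : (1 : ZMod 2) = 0 := by rw [← hab.1, h, hab.2.1]
    exact absurd hcon (by decide)
  have hedge : ∀ ab ∈ P, s(ab.1, ab.2) ∈ (unitGraph p).edgeFinset := by
    intro ab hab
    exact edge_mem (hPne ab hab) ((memP ab).mp hab).2.2
  -- the Hamming weight equals the number of crossing ordered pairs
  have key : hammingNorm (phi p f) = P.card := by
    unfold hammingNorm
    symm
    apply Finset.card_bij (fun ab hab => (⟨s(ab.1, ab.2), hedge ab hab⟩ :
      ↥(unitGraph p).edgeFinset))
    · intro ab hab
      rw [Finset.mem_filter]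
      refine ⟨Finset.mem_univ _, ?_⟩
      rw [phi_eval f (hPne ab hab) (hedge ab hab)]
      rw [memP] at hab
      rw [hab.1, hab.2.1]
      exact zmod2_one_add_zero
    · intro ab hab ab' hab' h
      rw [Subtype.mk.injEq, Sym2.eq_iff] at h
      rw [memP] at hab hab'
      rcases h with ⟨h1, h2⟩ | ⟨h1, h2⟩
      · exact Prod.ext h1 h2
      · exfalso
        have hcon : (1 : ZMod 2) = 0 := by rw [← hab.1, h1, hab'.2.1]
        exact absurd hcon (by decide)
    · rintro ⟨e, he⟩ hmem
      rw [Finset.mem_filter] at hmem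
      revert hmem
      revert he
      induction e using Sym2.ind with
      | _ a b =>
        intro he hmem
        have hadj : (unitGraph p).Adj a b :=
          (unitGraph p).mem_edgeSet.mp (SimpleGraph.mem_edgeFinset.mp he)
        have hval := phi_eval f hadj.ne he
        have hsum : a + b ≠ 0 := (ug_adj.mp hadj).2
        have hfne : f a + f b ≠ 0 := by rw [← hval]; exact hmem.2
        rcases zmod2_cases (f a) with ha | ha <;> rcases zmod2_cases (f b) with hb | hb
        · exfalso; rw [ha, hb] at hfne; exact hfne (by decide)
        · refine ⟨(b, a), (memP _).mpr ⟨hb, ha, by rwa [add_comm]⟩, ?_⟩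
          exact Subtype.ext (Sym2.eq_swap)
        · exact ⟨(a, b), (memP _).mpr ⟨ha, hb, hsum⟩, rfl⟩
        · exfalso; rw [ha, hb] at hfne; exact hfne (by decide)
  have hsplit : T.card + P.card = W.card * W'.card := by
    rw [← Finset.card_product]
    rw [hT, hP]
    exact Finset.card_filter_add_card_filter_not _
  have hT1 : T.card ≤ W.card := by
    apply Finset.card_le_card_of_injOn Prod.fst
    · intro ab hab
      rw [Finset.mem_coe, hT, Finset.mem_filter, Finset.mem_product] at hab
      exact hab.1.1
    · intro ab hab ab' hab' h
      simp only [Finset.coe_filter, Set.mem_setOf_eq, hT, Finset.mem_product] at hab hab'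
      have : ab.2 = ab'.2 := by
        have e1 := hab.2
        have e2 := hab'.2
        rw [← h] at e2
        linear_combination e1 - e2
      exact Prod.ext h this
  have hT2 : T.card ≤ W'.card := by
    apply Finset.card_le_card_of_injOn Prod.snd
    · intro ab hab
      rw [Finset.mem_coe, hT, Finset.mem_filter, Finset.mem_product] at hab
      exact hab.1.2
    · intro ab hab ab' hab' h
      simp only [Finset.coe_filter, Set.mem_setOf_eq, hT, Finset.mem_product] at hab hab'
      have : ab.1 = ab'.1 := by
        have e1 := hab.2
        have e2 := hab'.2
        rw [← h] at e2
        linear_combination e1 - e2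
      exact Prod.ext this h
  have hcard : W.card + W'.card = p := by
    have hWc : W' = Finset.univ.filter (fun x => ¬ f x = 1) := by
      ext x
      rw [hW']
      simp only [Finset.mem_filter, Finset.mem_univ, true_and]
      rcases zmod2_cases (f x) with h | h <;> simp [h]
    rw [hW, hWc, Finset.card_filter_add_card_filter_not, Finset.card_univ, ZMod.card]
  -- both sides nonempty
  obtain ⟨e0, he0⟩ := Function.ne_iff.mp hne
  obtain ⟨e0, he0e⟩ := e0
  have hWne : 1 ≤ W.card ∧ 1 ≤ W'.card := by
    revert he0
    revert he0e
    induction e0 using Sym2.ind with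
    | _ a b =>
      intro he0e he0
      have hadj : (unitGraph p).Adj a b :=
        (unitGraph p).mem_edgeSet.mp (SimpleGraph.mem_edgeFinset.mp he0e)
      have hval := phi_eval f hadj.ne he0e
      have hfne : f a + f b ≠ 0 := by rw [← hval]; simpa using he0
      have hmemW : ∀ x : ZMod p, f x = 1 → 1 ≤ W.card := by
        intro x hx
        apply Finset.card_pos.mpr
        exact ⟨x, by simp [hW, hx]⟩
      have hmemW' : ∀ x : ZMod p, f x = 0 → 1 ≤ W'.card := by
        intro x hx
        apply Finset.card_pos.mpr
        exact ⟨x, by simp [hW', hx]⟩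
      rcases zmod2_cases (f a) with ha | ha <;> rcases zmod2_cases (f b) with hb | hb
      · exfalso; rw [ha, hb] at hfne; exact hfne (by decide)
      · exact ⟨hmemW b hb, hmemW' a ha⟩
      · exact ⟨hmemW a ha, hmemW' b hb⟩
      · exfalso; rw [ha, hb] at hfne; exact hfne (by decide)
  rw [key]
  have := arith_aux hWne.1 hWne.2 hT1 hT2 (by omega : P.card + T.card = W.card * W'.card)
  omega

lemma exists_codeword (hodd : Odd p) :
    ∃ c ∈ rowCode (unitGraph p), c ≠ 0 ∧ hammingNorm c = p - 2 := by
  classical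
  have h3 := p_ge_three hodd
  have h10 : (1 : ZMod p) ≠ 0 := one_ne_zero
  refine ⟨incMat (unitGraph p) 1, Submodule.subset_span ⟨1, rfl⟩, ?_, ?_⟩
  · intro h
    have he : s((0 : ZMod p), 1) ∈ (unitGraph p).edgeFinset :=
      edge_mem (Ne.symm h10) (by simpa using h10)
    have := congrFun h ⟨s((0 : ZMod p), 1), he⟩
    simp [incMat, Sym2.mem_iff] at this
  · unfold hammingNorm
    have hcong : (Finset.univ.filter fun e : ↥(unitGraph p).edgeFinset =>
          incMat (unitGraph p) 1 e ≠ 0) =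
        (Finset.univ.filter fun e : ↥(unitGraph p).edgeFinset => (1 : ZMod p) ∈ e.val) := by
      apply Finset.filter_congr
      intro e _
      simp [incMat]
    have hbij : (Finset.univ.filter fun e : ↥(unitGraph p).edgeFinset =>
          (1 : ZMod p) ∈ e.val).card = ((unitGraph p).incidenceFinset 1).card := by
      apply Finset.card_bij (fun e _ => e.val)
      · intro a ha
        rw [Finset.mem_filter] at ha
        rw [SimpleGraph.mem_incidenceFinset]
        exact ⟨SimpleGraph.mem_edgeFinset.mp a.2, ha.2⟩
      · intro a _ b _ h
        exact Subtype.ext h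
      · intro e he
        rw [SimpleGraph.mem_incidenceFinset] at he
        exact ⟨⟨e, SimpleGraph.mem_edgeFinset.mpr he.1⟩,
          Finset.mem_filter.mpr ⟨Finset.mem_univ _, he.2⟩, rfl⟩
    rw [hcong, hbij, SimpleGraph.card_incidenceFinset_eq_degree, degree_eq hodd, if_neg h10]

end Main

theorem unitGraph_ZMod_p_code_params (p : ℕ) [Fact p.Prime] (hodd : Odd p) :
    (unitGraph p).edgeFinset.card = (p - 1) ^ 2 / 2 ∧
      Module.finrank (ZMod 2) (rowCode (unitGraph p)) = p - 1 ∧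
      minDist (unitGraph p) = p - 2 := by
  have h3 := p_ge_three hodd
  refine ⟨?_, ?_, ?_⟩
  · -- edge count
    have hsum := (unitGraph p).sum_degrees_eq_twice_card_edges
    have hdeg : ∑ v : ZMod p, (unitGraph p).degree v = (p - 1) * (p - 2) + (p - 1) := by
      rw [← Finset.sum_erase_add _ _ (Finset.mem_univ (0 : ZMod p))]
      have h0 : (unitGraph p).degree 0 = p - 1 := by rw [degree_eq hodd, if_pos rfl]
      have hrest : ∀ v ∈ Finset.univ.erase (0 : ZMod p),
          (unitGraph p).degree v = p - 2 := by
        intro v hv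
        rw [degree_eq hodd, if_neg (Finset.mem_erase.mp hv).1]
      rw [Finset.sum_congr rfl hrest, Finset.sum_const, h0,
        Finset.card_erase_of_mem (Finset.mem_univ _), Finset.card_univ, ZMod.card,
        smul_eq_mul]
    rw [hdeg] at hsum
    have hsq : (p - 1) * (p - 2) + (p - 1) = (p - 1) ^ 2 := by
      obtain ⟨a, rfl⟩ : ∃ a, p = a + 3 := ⟨p - 3, by omega⟩
      have e1 : a + 3 - 1 = a + 2 := by omega
      have e2 : a + 3 - 2 = a + 1 := by omega
      rw [e1, e2]; ring
    rw [hsq] at hsum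
    omega
  · -- dimension
    rw [rowCode_eq_range]
    have hk : Module.finrank (ZMod 2) (LinearMap.ker (phi p)) = 1 := by
      rw [ker_phi]
      apply finrank_span_singleton
      intro h
      have := congrFun h 0
      simp at this
    have hrn := LinearMap.finrank_range_add_finrank_ker (phi p)
    rw [Module.finrank_fintype_fun_eq_card, ZMod.card, hk] at hrn
    omega
  · -- minimum distance
    obtain ⟨c, hc, hc0, hcw⟩ := exists_codeword hodd
    unfold minDist
    have hmem : p - 2 ∈ {w | ∃ c ∈ rowCode (unitGraph p), c ≠ 0 ∧ w = hammingNorm c} :=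
      ⟨c, hc, hc0, hcw.symm⟩
    apply le_antisymm (Nat.sInf_le hmem)
    apply le_csInf ⟨p - 2, hmem⟩
    rintro w ⟨c', hc', hc'0, rfl⟩
    exact hamming_ge hodd hc' hc'0
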